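/- Let n ≥ 2, let S be a constant symmetric positive-definite (n−1)×(n−1) real matrix, let R ∈ ℝ, C ≥ 0, and let k : (−∞, R] → (symmetric (n−1)×(n−1) real matrices) be differentiable with ‖k(r)‖ ≤ C·e^{4r} and ‖k′(r)‖ ≤ C·e^{4r} for all r ≤ R. Set γ(r) := e^{2r}·S + k(r). Then there exist R′ ≤ R and C′ ≥ 0 such that for all r ≤ R′ the matrix γ(r) is invertible and, with χ(r) := (1/2)·γ(r)⁻¹·γ′(r) and σ(r) := χ(r) − (tr χ(r)/(n−1))·Id, one has tr(σ(r)²) ≤ C′·e^{2r}. -/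

import Mathlib

open Matrix Set
open scoped NNReal

attribute [local instance] Matrix.linftyOpNormedAddCommGroup Matrix.linftyOpNormedSpace
  Matrix.linftyOpNormedRing Matrix.linftyOpNormedAlgebra

namespace ShearAux

variable {ι : Type*} [Fintype ι]

lemma entry_abs_le_norm (M : Matrix ι ι ℝ) (i j : ι) : |M i j| ≤ ‖M‖ := by
  have h : ‖M i j‖₊ ≤ ‖M‖₊ := by
    rw [Matrix.linfty_opNNNorm_def]
    exact le_trans (Finset.single_le_sum (f := fun j => ‖M i j‖₊) (fun l _ => zero_le) (Finset.mem_univ j))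
      (Finset.le_sup (f := fun i => ∑ j, ‖M i j‖₊) (Finset.mem_univ i))
  calc |M i j| = ‖M i j‖ := (Real.norm_eq_abs _).symm
    _ ≤ ‖M‖ := by exact_mod_cast NNReal.coe_le_coe.mpr h

lemma norm_le_card_mul (M : Matrix ι ι ℝ) {c : ℝ} (hc : 0 ≤ c)
    (h : ∀ i j, |M i j| ≤ c) : ‖M‖ ≤ (Fintype.card ι : ℝ) * c := by
  have hb : ‖M‖₊ ≤ (Fintype.card ι : ℝ≥0) * c.toNNReal := by
    rw [Matrix.linfty_opNNNorm_def]
    refine Finset.sup_le fun i _ => ?_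
    calc ∑ j, ‖M i j‖₊ ≤ ∑ _j : ι, c.toNNReal := by
          refine Finset.sum_le_sum fun j _ => ?_
          rw [← NNReal.coe_le_coe]
          simpa [Real.norm_eq_abs, Real.coe_toNNReal c hc] using h i j
      _ = (Fintype.card ι : ℝ≥0) * c.toNNReal := by
          simp [Finset.sum_const, nsmul_eq_mul, Finset.card_univ]
  calc ‖M‖ = ((‖M‖₊ : ℝ)) := rfl
    _ ≤ (((Fintype.card ι : ℝ≥0) * c.toNNReal : ℝ≥0) : ℝ) := NNReal.coe_le_coe.mpr hb
    _ = (Fintype.card ι : ℝ) * c := by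
        push_cast [Real.coe_toNNReal c hc]
        ring

end ShearAux

/-- For Hayward-gauge light-cone data `γ(r) = e^{2r}·S + O₁(e^{4r})` (vertex at `r = −∞`),
`γ(r)` is invertible for small `r` and the squared shear satisfies `tr(σ²) ≤ C′·e^{2r}`. -/
theorem shear_decay_in_Hayward_gauge (n : ℕ) (hn : 2 ≤ n)
    (S : Matrix (Fin (n-1)) (Fin (n-1)) ℝ) (hS : S.PosDef)
    (R C : ℝ) (hC : 0 ≤ C)
    (k k' : ℝ → Matrix (Fin (n-1)) (Fin (n-1)) ℝ)
    (hksymm : ∀ r ∈ Iic R, (k r).IsSymm)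
    (hkderiv : ∀ r ∈ Iic R, ∀ i j,
      HasDerivWithinAt (fun s => k s i j) (k' r i j) (Iic R) r)
    (hkb : ∀ r ∈ Iic R, ∀ i j, |k r i j| ≤ C * Real.exp (4*r))
    (hkb' : ∀ r ∈ Iic R, ∀ i j, |k' r i j| ≤ C * Real.exp (4*r))
    (γ γ' : ℝ → Matrix (Fin (n-1)) (Fin (n-1)) ℝ)
    (hγ : ∀ r, γ r = Real.exp (2*r) • S + k r)
    (hγ' : ∀ r, γ' r = (2 * Real.exp (2*r)) • S + k' r)
    (χ : ℝ → Matrix (Fin (n-1)) (Fin (n-1)) ℝ)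
    (hχ : ∀ r, χ r = (1/2 : ℝ) • ((γ r)⁻¹ * γ' r))
    (σ : ℝ → Matrix (Fin (n-1)) (Fin (n-1)) ℝ)
    (hσ : ∀ r, σ r = χ r - ((χ r).trace / ((n:ℝ)-1)) • 1) :
    ∃ R' C' : ℝ, R' ≤ R ∧ 0 ≤ C' ∧
      ∀ r ∈ Iic R', IsUnit (γ r) ∧ (σ r * σ r).trace ≤ C' * Real.exp (2*r) := by
  haveI hne : Nonempty (Fin (n-1)) := ⟨⟨0, by omega⟩⟩
  haveI : CompleteSpace (Matrix (Fin (n-1)) (Fin (n-1)) ℝ) := FiniteDimensional.complete ℝ _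
  set m : ℝ := (n:ℝ) - 1 with hm
  have hcard : (Fintype.card (Fin (n-1)) : ℝ) = m := by
    have h1 : (1:ℕ) ≤ n := by omega
    simp [Fintype.card_fin, hm, Nat.cast_sub h1]
  have hm1 : (1:ℝ) ≤ m := by
    have : (2:ℝ) ≤ (n:ℝ) := by exact_mod_cast hn
    simp [hm]; linarith
  have hm0 : m ≠ 0 := by linarith
  have hmpos : (0:ℝ) < m := by linarith
  -- S is a unit
  have hSdet : IsUnit S.det := isUnit_iff_ne_zero.mpr (ne_of_gt hS.det_pos)
  have hUS : IsUnit S := (Matrix.isUnit_iff_isUnit_det S).mpr hSdet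
  obtain ⟨u, hu⟩ := hUS
  have hε0 : (0:ℝ) < ‖((u⁻¹ : _) : Matrix (Fin (n-1)) (Fin (n-1)) ℝ)‖⁻¹ := by
    exact inv_pos.mpr (Units.norm_pos u⁻¹)
  set ε0 := ‖((u⁻¹ : _) : Matrix (Fin (n-1)) (Fin (n-1)) ℝ)‖⁻¹ with hε0def
  -- continuity of Ring.inverse at S
  have hcont : ContinuousAt Ring.inverse S := by
    have := NormedRing.inverse_continuousAt u
    rwa [hu] at this
  obtain ⟨δ, hδpos, hδ⟩ := Metric.continuousAt_iff.mp hcont 1 one_pos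
  set B : ℝ := ‖Ring.inverse S‖ + 1 with hB
  have hBpos : (0:ℝ) < B := by positivity
  set d : ℝ := min δ ε0 with hd
  have hdpos : (0:ℝ) < d := lt_min hδpos hε0
  set R' : ℝ := min R (Real.log (d / (m*C+1)) / 2) with hR'
  have hMC : (0:ℝ) < m*C + 1 := by positivity
  refine ⟨R', 4 * m^2 * ((3/2)*B*m*C)^2 * Real.exp (2*R'), min_le_left _ _, by positivity, ?_⟩
  intro r hr
  have hrR : r ∈ Iic R := mem_Iic.mpr (le_trans (mem_Iic.mp hr) (min_le_left _ _))
  -- exponential smallness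
  have hexp : Real.exp (2*r) ≤ d / (m*C+1) := by
    have h1 : 2*r ≤ Real.log (d / (m*C+1)) := by
      have h0 : r ≤ Real.log (d / (m*C+1)) / 2 := le_trans (mem_Iic.mp hr) (min_le_right _ _)
      linarith
    calc Real.exp (2*r) ≤ Real.exp (Real.log (d / (m*C+1))) := Real.exp_le_exp.mpr h1
      _ = d / (m*C+1) := Real.exp_log (by positivity)
  have hsmall : m * C * Real.exp (2*r) < d := by
    have h2 : m * C * Real.exp (2*r) ≤ m * C * (d / (m*C+1)) :=
      mul_le_mul_of_nonneg_left hexp (by positivity)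
    have h3 : m * C * (d / (m*C+1)) < d := by
      have heq : m * C * (d / (m*C+1)) = d * (m*C/(m*C+1)) := by ring
      have hlt : m*C/(m*C+1) < 1 := by
        rw [div_lt_one hMC]; linarith
      rw [heq]
      nlinarith
    exact lt_of_le_of_lt h2 h3
  -- the matrix A r = S + e^{-2r} k r
  set A : Matrix (Fin (n-1)) (Fin (n-1)) ℝ := S + Real.exp (-(2*r)) • k r with hA
  have hknorm : ‖k r‖ ≤ m * (C * Real.exp (4*r)) := by
    rw [← hcard]
    exact ShearAux.norm_le_card_mul _ (by positivity) (hkb r hrR)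
  have hk'norm : ‖k' r‖ ≤ m * (C * Real.exp (4*r)) := by
    rw [← hcard]
    exact ShearAux.norm_le_card_mul _ (by positivity) (hkb' r hrR)
  have hee : Real.exp (-(2*r)) * Real.exp (4*r) = Real.exp (2*r) := by
    rw [← Real.exp_add]; congr 1; ring
  have hAS : ‖A - S‖ ≤ m * C * Real.exp (2*r) := by
    have : A - S = Real.exp (-(2*r)) • k r := by rw [hA]; abel
    rw [this, norm_smul, Real.norm_eq_abs, abs_of_pos (Real.exp_pos _)]
    calc Real.exp (-(2*r)) * ‖k r‖ ≤ Real.exp (-(2*r)) * (m * (C * Real.exp (4*r))) := by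
          exact mul_le_mul_of_nonneg_left hknorm (le_of_lt (Real.exp_pos _))
      _ = m * C * (Real.exp (-(2*r)) * Real.exp (4*r)) := by ring
      _ = m * C * Real.exp (2*r) := by rw [hee]
  have hASd : ‖A - S‖ < d := lt_of_le_of_lt hAS hsmall
  -- A is a unit
  have hAunit : IsUnit A := by
    have h : ‖A - (u : Matrix (Fin (n-1)) (Fin (n-1)) ℝ)‖ < ε0 := by
      rw [hu]; exact lt_of_lt_of_le hASd (min_le_right _ _)
    exact ⟨Units.ofNearby u A h, rfl⟩
  have hAdet : IsUnit A.det := (Matrix.isUnit_iff_isUnit_det _).mp hAunit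
  -- bound on ‖A⁻¹‖
  have hAinv_norm : ‖A⁻¹‖ ≤ B := by
    have hdist : dist A S < δ := by
      rw [dist_eq_norm]; exact lt_of_lt_of_le hASd (min_le_left _ _)
    have h1 := hδ hdist
    rw [dist_eq_norm] at h1
    rw [Matrix.nonsing_inv_eq_ringInverse]
    have h2 := norm_add_le (Ring.inverse A - Ring.inverse S) (Ring.inverse S)
    have h3 : Ring.inverse A - Ring.inverse S + Ring.inverse S = Ring.inverse A := by abel
    rw [h3] at h2
    rw [hB]; linarith
  -- γ r = e^{2r} • A
  have hγeq : γ r = Real.exp (2*r) • A := by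
    rw [hγ, hA, smul_add, smul_smul, ← Real.exp_add]
    have : 2*r + -(2*r) = 0 := by ring
    rw [this, Real.exp_zero, one_smul]
  have hmul : (Real.exp (2*r) • A) * (Real.exp (-(2*r)) • A⁻¹) = 1 := by
    rw [Matrix.smul_mul, Matrix.mul_smul, smul_smul, ← Real.exp_add]
    have : 2*r + -(2*r) = 0 := by ring
    rw [this, Real.exp_zero, one_smul, Matrix.mul_nonsing_inv _ hAdet]
  have hγunit : IsUnit (γ r) := by
    have hdetγ : (γ r).det = Real.exp (2*r) ^ Fintype.card (Fin (n-1)) * A.det := by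
      rw [hγeq, Matrix.det_smul]
    apply (Matrix.isUnit_iff_isUnit_det _).mpr
    rw [hdetγ]
    exact (isUnit_iff_ne_zero.mpr (pow_ne_zero _ (Real.exp_ne_zero _))).mul hAdet
  refine ⟨hγunit, ?_⟩
  have hγinv : (γ r)⁻¹ = Real.exp (-(2*r)) • A⁻¹ := by
    apply Matrix.inv_eq_right_inv
    rw [hγeq]; exact hmul
  -- χ r = 1 + E
  set E : Matrix (Fin (n-1)) (Fin (n-1)) ℝ :=
    ((1/2) * Real.exp (-(2*r))) • (A⁻¹ * k' r) - Real.exp (-(2*r)) • (A⁻¹ * k r) with hE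
  have hAinvS : A⁻¹ * S = 1 - Real.exp (-(2*r)) • (A⁻¹ * k r) := by
    have hS' : S = A - Real.exp (-(2*r)) • k r := by rw [hA]; abel
    rw [hS', Matrix.mul_sub, Matrix.mul_smul, Matrix.nonsing_inv_mul _ hAdet]
  have e1 : (γ r)⁻¹ * γ' r =
      (2:ℝ) • (A⁻¹ * S) + Real.exp (-(2*r)) • (A⁻¹ * k' r) := by
    rw [hγinv, hγ', Matrix.smul_mul, Matrix.mul_add, Matrix.mul_smul, smul_add, smul_smul]
    congr 2
    rw [show Real.exp (-(2*r)) * (2 * Real.exp (2*r))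
        = 2 * (Real.exp (-(2*r)) * Real.exp (2*r)) from by ring, ← Real.exp_add,
      show -(2*r) + 2*r = 0 from by ring, Real.exp_zero, mul_one]
  have e2 : χ r = 1 + E := by
    rw [hχ, e1, hAinvS, hE]
    module
  -- trace computation
  have htrone : (1 : Matrix (Fin (n-1)) (Fin (n-1)) ℝ).trace = m := by
    rw [Matrix.trace_one, hcard]
  have htr1 : (χ r).trace = m + E.trace := by
    rw [e2, Matrix.trace_add, htrone]
  have hσE : σ r = E - (E.trace / m) • 1 := by
    rw [hσ, htr1, e2, add_div, div_self hm0, add_smul, one_smul]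
    abel
  -- norm bound on E
  have h1 : ‖A⁻¹ * k' r‖ ≤ B * (m * (C * Real.exp (4*r))) :=
    le_trans (Matrix.linfty_opNorm_mul _ _)
      (mul_le_mul hAinv_norm hk'norm (norm_nonneg _) (le_of_lt hBpos))
  have h2 : ‖A⁻¹ * k r‖ ≤ B * (m * (C * Real.exp (4*r))) :=
    le_trans (Matrix.linfty_opNorm_mul _ _)
      (mul_le_mul hAinv_norm hknorm (norm_nonneg _) (le_of_lt hBpos))
  have hEnorm : ‖E‖ ≤ (3/2)*B*m*C * Real.exp (2*r) := by
    have hb0 : (0:ℝ) < Real.exp (-(2*r)) := Real.exp_pos _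
    calc ‖E‖ ≤ ‖((1/2) * Real.exp (-(2*r))) • (A⁻¹ * k' r)‖ +
            ‖Real.exp (-(2*r)) • (A⁻¹ * k r)‖ := norm_sub_le _ _
      _ = (1/2) * Real.exp (-(2*r)) * ‖A⁻¹ * k' r‖ +
            Real.exp (-(2*r)) * ‖A⁻¹ * k r‖ := by
          rw [norm_smul, norm_smul, Real.norm_eq_abs, Real.norm_eq_abs,
            abs_of_pos hb0, abs_of_pos (by positivity : (0:ℝ) < (1/2) * Real.exp (-(2*r)))]
      _ ≤ (1/2) * Real.exp (-(2*r)) * (B * (m * (C * Real.exp (4*r)))) +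
            Real.exp (-(2*r)) * (B * (m * (C * Real.exp (4*r)))) := by
          exact add_le_add (mul_le_mul_of_nonneg_left h1 (by positivity))
            (mul_le_mul_of_nonneg_left h2 (le_of_lt hb0))
      _ = (3/2)*B*m*C * (Real.exp (-(2*r)) * Real.exp (4*r)) := by ring
      _ = (3/2)*B*m*C * Real.exp (2*r) := by rw [hee]
  have hE0 : (0:ℝ) ≤ ‖E‖ := norm_nonneg _
  -- trace of E bound
  have htrE : |E.trace| ≤ m * ‖E‖ := by
    calc |E.trace| = |∑ i, E i i| := by rw [Matrix.trace]; rfl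
      _ ≤ ∑ i, |E i i| := Finset.abs_sum_le_sum_abs _ _
      _ ≤ ∑ _i : Fin (n-1), ‖E‖ := Finset.sum_le_sum fun i _ => ShearAux.entry_abs_le_norm E i i
      _ = (Fintype.card (Fin (n-1)) : ℝ) * ‖E‖ := by
          rw [Finset.sum_const, Finset.card_univ, nsmul_eq_mul]
      _ = m * ‖E‖ := by rw [hcard]
  -- entrywise bound on σ
  have hentry : ∀ i j, |σ r i j| ≤ 2 * ‖E‖ := by
    intro i j
    have hσij : σ r i j = E i j - (E.trace / m) * (1 : Matrix (Fin (n-1)) (Fin (n-1)) ℝ) i j := by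
      rw [hσE]; simp [Matrix.sub_apply, Matrix.smul_apply, smul_eq_mul]
    have hone : |(1 : Matrix (Fin (n-1)) (Fin (n-1)) ℝ) i j| ≤ 1 := by
      rcases eq_or_ne i j with h | h <;> simp [Matrix.one_apply, h]
    have hEij := ShearAux.entry_abs_le_norm E i j
    have htr : |E.trace / m| ≤ ‖E‖ := by
      rw [abs_div, abs_of_pos hmpos, div_le_iff₀ hmpos]
      calc |E.trace| ≤ m * ‖E‖ := htrE
        _ = ‖E‖ * m := by ring
    calc |σ r i j| = |E i j - (E.trace / m) * (1 : Matrix (Fin (n-1)) (Fin (n-1)) ℝ) i j| := by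
          rw [hσij]
      _ ≤ |E i j| + |E.trace / m| * |(1 : Matrix (Fin (n-1)) (Fin (n-1)) ℝ) i j| := by
          refine le_trans (abs_sub _ _) ?_
          rw [abs_mul]
      _ ≤ ‖E‖ + ‖E‖ * 1 :=
          add_le_add hEij (mul_le_mul htr hone (abs_nonneg _) (norm_nonneg _))
      _ = 2 * ‖E‖ := by ring
  -- trace of σ² bound
  have htrσ : (σ r * σ r).trace ≤ m^2 * (2*‖E‖)^2 := by
    have hform : (σ r * σ r).trace = ∑ i, ∑ j, σ r i j * σ r j i := by
      simp [Matrix.trace, Matrix.diag, Matrix.mul_apply]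
    rw [hform]
    calc ∑ i, ∑ j, σ r i j * σ r j i ≤ ∑ i : Fin (n-1), ∑ j : Fin (n-1), (2*‖E‖)*(2*‖E‖) := by
          refine Finset.sum_le_sum fun i _ => Finset.sum_le_sum fun j _ => ?_
          calc σ r i j * σ r j i ≤ |σ r i j * σ r j i| := le_abs_self _
            _ = |σ r i j| * |σ r j i| := abs_mul _ _
            _ ≤ (2*‖E‖)*(2*‖E‖) := by
                exact mul_le_mul (hentry i j) (hentry j i) (abs_nonneg _) (by positivity)
      _ = (Fintype.card (Fin (n-1)) : ℝ)^2 * (2*‖E‖)^2 := by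
          rw [Finset.sum_const, Finset.sum_const, Finset.card_univ, nsmul_eq_mul, nsmul_eq_mul]
          ring
      _ = m^2 * (2*‖E‖)^2 := by rw [hcard]
  have hexp' : Real.exp (2*r) ≤ Real.exp (2*R') := by
    apply Real.exp_le_exp.mpr; linarith [hr.out]
  calc (σ r * σ r).trace ≤ m^2 * (2*‖E‖)^2 := htrσ
    _ ≤ m^2 * (2*((3/2)*B*m*C * Real.exp (2*r)))^2 := by gcongr
    _ = 4 * m^2 * ((3/2)*B*m*C)^2 * (Real.exp (2*r) * Real.exp (2*r)) := by ring
    _ ≤ 4 * m^2 * ((3/2)*B*m*C)^2 * (Real.exp (2*R') * Real.exp (2*r)) := by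
        gcongr
    _ = 4 * m^2 * ((3/2)*B*m*C)^2 * Real.exp (2*R') * Real.exp (2*r) := by ring
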